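/- Let M be a real nonassociative algebra with unit having a basis {1, i, j, k} whose multiplication is given by table (Tn) with parameters a, b, c, d, f, g, h, e ∈ ℝ. Then the following are equivalent: (1) M is associative; (2) for every q ∈ M with q² = −1 and every y ∈ M one has (q, q, y) = 0 and (y, q, q) = 0, and there exists q ∈ M with q² = −1 not lying in span_ℝ{1, i}; (3) there exists a basis {1, i', j', k'} of M with i'² = −1, i'j' = k', i'k' = −j', j'i' = −k', k'i' = j' realizing one of the following three tables: (M⁺) j'² = k'² = 1, j'k' = −i', k'j' = i'; (M⁰) j'² = k'² = 0, j'k' = k'j' = 0; (ℍ) j'² = k'² = −1, j'k' = i', k'j' = −i'. -/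

import Mathlib

set_option linter.unusedSectionVars false
set_option maxHeartbeats 4000000

/-- The associator of a nonassociative algebra: `(x, y, z) = (xy)z - x(yz)`. -/
def assocator {A : Type*} [NonAssocRing A] (x y z : A) : A :=
  x * y * z - x * (y * z)

section AuxiliaryLemmas

variable {M : Type*} [NonAssocRing M] [Module ℝ M]
    [SMulCommClass ℝ M M] [IsScalarTower ℝ M M]

lemma coords_zero_aux (B : Module.Basis (Fin 4) ℝ M) (i j k : M)
    (hB0 : B 0 = 1) (hB1 : B 1 = i) (hB2 : B 2 = j) (hB3 : B 3 = k)
    {u0 u1 u2 u3 : ℝ} (h : u0 • (1 : M) + u1 • i + u2 • j + u3 • k = 0) :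
    u0 = 0 ∧ u1 = 0 ∧ u2 = 0 ∧ u3 = 0 := by
  have key := Fintype.linearIndependent_iff.mp B.linearIndependent ![u0, u1, u2, u3] ?_
  · exact ⟨key 0, key 1, key 2, key 3⟩
  · rw [Fin.sum_univ_four]
    simpa [hB0, hB1, hB2, hB3] using h

lemma expand_repr_aux (B : Module.Basis (Fin 4) ℝ M) (i j k : M)
    (hB0 : B 0 = 1) (hB1 : B 1 = i) (hB2 : B 2 = j) (hB3 : B 3 = k) (x : M) :
    x = (B.repr x 0) • (1 : M) + (B.repr x 1) • i + (B.repr x 2) • j + (B.repr x 3) • k := by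
  conv_lhs => rw [← B.sum_repr x]
  rw [Fin.sum_univ_four, hB0, hB1, hB2, hB3]

lemma assoc_of_basis_aux (B : Module.Basis (Fin 4) ℝ M)
    (H : ∀ p q r : Fin 4, (B p * B q) * B r = B p * (B q * B r)) :
    ∀ x y z : M, x * y * z = x * (y * z) := by
  have h1 : ∀ (p q : Fin 4) (z : M), (B p * B q) * z = B p * (B q * z) := by
    intro p q z
    rw [← B.sum_repr z, Finset.mul_sum, Finset.mul_sum, Finset.mul_sum]
    refine Finset.sum_congr rfl fun l _ => ?_
    simp only [mul_smul_comm, smul_mul_assoc]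
    rw [H]
  have h2 : ∀ (p : Fin 4) (y z : M), (B p * y) * z = B p * (y * z) := by
    intro p y z
    rw [← B.sum_repr y, Finset.mul_sum, Finset.sum_mul, Finset.sum_mul, Finset.mul_sum]
    refine Finset.sum_congr rfl fun l _ => ?_
    simp only [mul_smul_comm, smul_mul_assoc]
    rw [h1]
  intro x y z
  rw [← B.sum_repr x, Finset.sum_mul, Finset.sum_mul, Finset.sum_mul]
  refine Finset.sum_congr rfl fun l _ => ?_
  simp only [mul_smul_comm, smul_mul_assoc]
  rw [h2]

lemma assoc_of_table_aux (B : Module.Basis (Fin 4) ℝ M) (i j k : M) (a : ℝ)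
    (hB0 : B 0 = 1) (hB1 : B 1 = i) (hB2 : B 2 = j) (hB3 : B 3 = k)
    (hii : i * i = -1) (hij : i * j = k) (hik : i * k = -j)
    (hji : j * i = -k) (hki : k * i = j)
    (hjj : j * j = a • (1 : M)) (hkk : k * k = a • (1 : M))
    (hjk : j * k = -(a • i)) (hkj : k * j = a • i) :
    ∀ x y z : M, x * y * z = x * (y * z) := by
  refine assoc_of_basis_aux B ?_
  intro p q r
  fin_cases p <;> fin_cases q <;> fin_cases r <;>
    simp only [Fin.isValue, Fin.reduceFinMk, hB0, hB1, hB2, hB3, hii, hij, hik, hji, hki,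
      hjj, hkk, hjk, hkj, one_mul, mul_one, mul_neg, neg_mul, neg_neg, smul_mul_assoc,
      mul_smul_comm, smul_neg, neg_smul] <;>
    try module

end AuxiliaryLemmas

/-- For a real nonassociative unital algebra `M` with basis `{1, i, j, k}` multiplying by
table `(Tn)`, the following are equivalent: (1) `M` is associative; (2) `M` is partially
left and right alternative and has an imaginary unit outside `span ℝ {1, i}`; (3) there is
a basis `{1, i', j', k'}` of `M` realizing one of the tables of `M⁺`, `M⁰` or `ℍ`. -/
theorem associative_tfae {M : Type*} [NonAssocRing M] [Module ℝ M]
    [SMulCommClass ℝ M M] [IsScalarTower ℝ M M]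
    (a b c d f g h e : ℝ) (B : Module.Basis (Fin 4) ℝ M) (i j k : M)
    (hB0 : B 0 = 1) (hB1 : B 1 = i) (hB2 : B 2 = j) (hB3 : B 3 = k)
    (hii : i * i = -1) (hij : i * j = k) (hik : i * k = -j)
    (hji : j * i = -k) (hki : k * i = j)
    (hjj : j * j = a • (1 : M) + b • i + c • j + d • k)
    (hkk : k * k = a • (1 : M) + b • i + c • j + d • k)
    (hjk : j * k = f • (1 : M) + g • i + h • j + e • k)
    (hkj : k * j = -(f • (1 : M) + g • i + h • j + e • k)) :
    ((∀ x y z : M, x * y * z = x * (y * z)) ↔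
      ((∀ q : M, q * q = -1 → ∀ y : M, assocator q q y = 0 ∧ assocator y q q = 0) ∧
        ∃ q : M, q * q = -1 ∧ q ∉ Submodule.span ℝ ({1, i} : Set M))) ∧
    (((∀ q : M, q * q = -1 → ∀ y : M, assocator q q y = 0 ∧ assocator y q q = 0) ∧
        ∃ q : M, q * q = -1 ∧ q ∉ Submodule.span ℝ ({1, i} : Set M)) ↔
      (∃ (B' : Module.Basis (Fin 4) ℝ M) (i' j' k' : M),
        B' 0 = 1 ∧ B' 1 = i' ∧ B' 2 = j' ∧ B' 3 = k' ∧
        i' * i' = -1 ∧ i' * j' = k' ∧ i' * k' = -j' ∧ j' * i' = -k' ∧ k' * i' = j' ∧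
        ((j' * j' = 1 ∧ k' * k' = 1 ∧ j' * k' = -i' ∧ k' * j' = i') ∨
         (j' * j' = 0 ∧ k' * k' = 0 ∧ j' * k' = 0 ∧ k' * j' = 0) ∨
         (j' * j' = -1 ∧ k' * k' = -1 ∧ j' * k' = i' ∧ k' * j' = -i')))) := by
  -- ================= P → associativity =================
  have PtoAssoc : (b = 0 ∧ c = 0 ∧ d = 0 ∧ f = 0 ∧ h = 0 ∧ e = 0 ∧ g = -a) →
      ∀ x y z : M, x * y * z = x * (y * z) := by
    rintro ⟨pb, pc, pd, pf, ph, pe, pg⟩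
    refine assoc_of_table_aux B i j k a hB0 hB1 hB2 hB3 hii hij hik hji hki ?_ ?_ ?_ ?_
    · rw [hjj, pb, pc, pd]; simp
    · rw [hkk, pb, pc, pd]; simp
    · rw [hjk, pf, ph, pe, pg]; simp [neg_smul]
    · rw [hkj, pf, ph, pe, pg]; simp [neg_smul]
  -- ================= associativity → P =================
  have AssocToP : (∀ x y z : M, x * y * z = x * (y * z)) →
      (b = 0 ∧ c = 0 ∧ d = 0 ∧ f = 0 ∧ h = 0 ∧ e = 0 ∧ g = -a) := by
    intro hassoc
    have h1 := hassoc i j k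
    have h2 := hassoc j k i
    have h3 := hassoc j j k
    simp only [mul_add, add_mul, smul_mul_assoc, mul_smul_comm, one_mul, mul_one,
      hii, hij, hik, hji, hki, hjj, hkk, hjk, hkj,
      smul_add, smul_neg, mul_neg, neg_mul, smul_smul] at h1 h2 h3
    have c1 : (g+a) • (1:M) + (b-f) • i + (c+e) • j + (d-h) • k = 0 := by
      linear_combination (norm := module) h1
    have c2 : (-g-a) • (1:M) + (f-b) • i + (e-c) • j + (-h-d) • k = 0 := by
      linear_combination (norm := module) h2
    have c3 : (-(f*e) + c*f - a*h + a*d) • (1:M) + (-(g*e) + c*g - b*h + b*d) • i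
        + (-(h*e) - f + c*d - b) • j + (-e^2 + g - d*h + d^2 + c*e + a) • k = 0 := by
      linear_combination (norm := module) h3
    obtain ⟨e10, e11, e12, e13⟩ := coords_zero_aux B i j k hB0 hB1 hB2 hB3 c1
    obtain ⟨e20, e21, e22, e23⟩ := coords_zero_aux B i j k hB0 hB1 hB2 hB3 c2
    obtain ⟨e30, e31, e32, e33⟩ := coords_zero_aux B i j k hB0 hB1 hB2 hB3 c3
    have pc : c = 0 := by linarith
    have pe : e = 0 := by linarith
    have pd : d = 0 := by linarith
    have ph : h = 0 := by linarith
    have pb : b = 0 := by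
      rw [pc, pd, pe, ph] at e32; linarith
    exact ⟨pb, pc, pd, by linarith, ph, pe, by linarith⟩
  -- ================= condition (2) → P =================
  have C2toP : ((∀ q : M, q * q = -1 → ∀ y : M, assocator q q y = 0 ∧ assocator y q q = 0) ∧
        ∃ q : M, q * q = -1 ∧ q ∉ Submodule.span ℝ ({1, i} : Set M)) →
      (b = 0 ∧ c = 0 ∧ d = 0 ∧ f = 0 ∧ h = 0 ∧ e = 0 ∧ g = -a) := by
    rintro ⟨halt, q, hq2, hqspan⟩
    have hq := expand_repr_aux B i j k hB0 hB1 hB2 hB3 q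
    set al := B.repr q 0 with hal
    set be := B.repr q 1 with hbe
    set ga := B.repr q 2 with hga
    set de := B.repr q 3 with hde
    -- γ² + δ² ≠ 0 since q ∉ span {1, i}
    have hs : ga^2 + de^2 ≠ 0 := by
      intro h0
      have hg0 : ga = 0 := by nlinarith [sq_nonneg ga, sq_nonneg de]
      have hd0 : de = 0 := by nlinarith [sq_nonneg ga, sq_nonneg de]
      apply hqspan
      rw [hq, hg0, hd0, zero_smul, zero_smul, add_zero, add_zero]
      exact Submodule.add_mem _
        (Submodule.smul_mem _ _ (Submodule.subset_span (by simp)))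
        (Submodule.smul_mem _ _ (Submodule.subset_span (by simp)))
    -- the basic vector equations
    have hLi : q * (q * i) = -i := by
      have hx := (halt q hq2 i).1
      unfold assocator at hx
      rw [hq2, neg_one_mul] at hx
      exact (sub_eq_zero.mp hx).symm
    have hLj : q * (q * j) = -j := by
      have hx := (halt q hq2 j).1
      unfold assocator at hx
      rw [hq2, neg_one_mul] at hx
      exact (sub_eq_zero.mp hx).symm
    have hRi : (i * q) * q = -i := by
      have hx := (halt q hq2 i).2
      unfold assocator at hx
      rw [hq2, mul_neg_one] at hx
      exact sub_eq_zero.mp hx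
    -- extract coordinates
    rw [hq] at hq2 hLi hLj hRi
    simp only [mul_add, add_mul, smul_mul_assoc, mul_smul_comm, one_mul, mul_one,
      hii, hij, hik, hji, hki, hjj, hkk, hjk, hkj,
      smul_add, smul_neg, mul_neg, neg_mul, smul_smul] at hq2 hLi hLj hRi
    have cE : (1 - be^2 + al^2 + a*de^2 + a*ga^2) • (1:M) + (2*al*be + b*de^2 + b*ga^2) • i
        + (2*al*ga + c*de^2 + c*ga^2) • j + (2*al*de + d*de^2 + d*ga^2) • k = 0 := by
      linear_combination (norm := module) hq2
    have cL : (-(2*al*be) - f*de^2 - f*ga^2) • (1:M) + (1 - be^2 + al^2 - g*de^2 - g*ga^2) • i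
        + (2*al*de - h*de^2 - h*ga^2) • j + (-(2*al*ga) - e*de^2 - e*ga^2) • k = 0 := by
      linear_combination (norm := module) hLi
    have cR : (-(2*al*be) - f*de^2 - f*ga^2) • (1:M) + (1 - be^2 + al^2 - g*de^2 - g*ga^2) • i
        + (-(2*al*de) - h*de^2 - h*ga^2) • j + (2*al*ga - e*de^2 - e*ga^2) • k = 0 := by
      linear_combination (norm := module) hRi
    have cJ : (g*be*de + f*be*ga - 2*f*al*de - f*e*ga*de + f*h*de^2 + d*f*ga^2 - c*f*ga*de - b*be*ga + a*be*de + 2*a*al*ga - a*e*de^2 - a*h*ga*de + a*d*ga*de + a*c*ga^2) • (1:M)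
        + (g*be*ga - 2*g*al*de - g*e*ga*de + g*h*de^2 - f*be*de + d*g*ga^2 - c*g*ga*de + b*be*de + 2*b*al*ga - b*e*de^2 - b*h*ga*de + b*d*ga*de + b*c*ga^2 + a*be*ga) • i
        + (1 - be^2 + al^2 + e*be*de + h*be*ga - 2*h*al*de - h*e*ga*de + h^2*de^2 - g*de^2 - f*ga*de - d*be*ga + d*h*ga^2 + c*be*de + 2*c*al*ga - c*e*de^2 - 2*c*h*ga*de + c*d*ga*de + c^2*ga^2 + b*ga*de + a*ga^2) • j
        + (2*al*be + e*be*ga - 2*e*al*de - e^2*ga*de - h*be*de + h*e*de^2 + g*ga*de - f*de^2 + d*be*de + 2*d*al*ga - d*e*de^2 + d*e*ga^2 - d*h*ga*de + d^2*ga*de + c*be*ga - c*e*ga*de + c*d*ga^2 - b*ga^2 + a*ga*de) • k = 0 := by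
      linear_combination (norm := module) hLj
    obtain ⟨E0, E1, E2, E3⟩ := coords_zero_aux B i j k hB0 hB1 hB2 hB3 cE
    obtain ⟨L0, L1, L2, L3⟩ := coords_zero_aux B i j k hB0 hB1 hB2 hB3 cL
    obtain ⟨R0, R1, R2, R3⟩ := coords_zero_aux B i j k hB0 hB1 hB2 hB3 cR
    obtain ⟨J0, J1, J2, J3⟩ := coords_zero_aux B i j k hB0 hB1 hB2 hB3 cJ
    have cancel : ∀ t : ℝ, t * (ga^2 + de^2) = 0 → t = 0 := by
      intro t ht
      rcases mul_eq_zero.mp ht with h' | h'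
      · exact h'
      · exact absurd h' hs
    have pfb : f - b = 0 := cancel _ (by linear_combination -E1 - L0)
    have pga : g + a = 0 := cancel _ (by linear_combination E0 - L1)
    have p1 : d + h = 0 := cancel _ (by linear_combination E3 - L2)
    have p2 : e - c = 0 := cancel _ (by linear_combination -E2 - L3)
    have p3 : d - h = 0 := cancel _ (by linear_combination R2 + E3)
    have p4 : e + c = 0 := cancel _ (by linear_combination E2 - R3)
    have pc : c = 0 := by linarith
    have pd : d = 0 := by linarith
    have pe : e = 0 := by linarith
    have ph : h = 0 := by linarith
    have pf2 : f = b := by linarith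
    have pg : g = -a := by linarith
    simp only [pc, pd, pe, ph, pf2, pg] at J3
    have pb : b = 0 := cancel _ (by linear_combination E1/2 - J3/2)
    exact ⟨pb, pc, pd, pf2.trans pb, ph, pe, pg⟩
  -- ================= P → imaginary unit outside span {1, i} =================
  have ExistsQ : (b = 0 ∧ c = 0 ∧ d = 0 ∧ f = 0 ∧ h = 0 ∧ e = 0 ∧ g = -a) →
      ∃ q : M, q * q = -1 ∧ q ∉ Submodule.span ℝ ({1, i} : Set M) := by
    rintro ⟨pb, pc, pd, pf, ph, pe, pg⟩
    have hjj' : j * j = a • (1:M) := by rw [hjj, pb, pc, pd]; simp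
    have h1a : (0:ℝ) < 1 + |a| := by positivity
    set r : ℝ := Real.sqrt (1 + |a|) with hrdef
    have hrpos : 0 < r := Real.sqrt_pos.mpr h1a
    have hr2 : r^2 = 1 + |a| := Real.sq_sqrt h1a.le
    set ga : ℝ := r⁻¹ with hgadef
    have hgapos : 0 < ga := inv_pos.mpr hrpos
    have hga2 : ga^2 = (1+|a|)⁻¹ := by rw [hgadef, inv_pow, hr2]
    have hnn : (0:ℝ) ≤ 1 + a * ga^2 := by
      have h1 : -|a| ≤ a := neg_abs_le a
      have h2 : (0:ℝ) < (1+|a|)⁻¹ := inv_pos.mpr h1a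
      have h3 : (1+|a|) * (1+|a|)⁻¹ = 1 := mul_inv_cancel₀ (ne_of_gt h1a)
      rw [hga2]
      nlinarith
    set be : ℝ := Real.sqrt (1 + a * ga^2) with hbedef
    have hbe2 : be^2 = 1 + a * ga^2 := Real.sq_sqrt hnn
    refine ⟨be • i + ga • j, ?_, ?_⟩
    · have expand : (be • i + ga • j) * (be • i + ga • j) = (a*(ga*ga) - be*be) • (1:M) := by
        simp only [mul_add, add_mul, smul_mul_assoc, mul_smul_comm, smul_smul,
          hii, hij, hji, hjj']
        module
      rw [expand, show a*(ga*ga) - be*be = -1 from by linear_combination -hbe2,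
        neg_smul, one_smul]
    · intro hmem
      rw [← hB0, ← hB1, ← hB2] at hmem
      rcases Submodule.mem_span_pair.mp hmem with ⟨u, v, huv⟩
      have h2a : B.repr (u • B 0 + v • B 1) 2 = 0 := by simp [Finsupp.single_apply]
      rw [huv] at h2a
      have h2b : B.repr (be • B 1 + ga • B 2) 2 = ga := by simp [Finsupp.single_apply]
      exact absurd (h2b.symm.trans h2a) (ne_of_gt hgapos)
  -- ================= P → condition (3) =================
  have PtoC3 : (b = 0 ∧ c = 0 ∧ d = 0 ∧ f = 0 ∧ h = 0 ∧ e = 0 ∧ g = -a) →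
      (∃ (B' : Module.Basis (Fin 4) ℝ M) (i' j' k' : M),
        B' 0 = 1 ∧ B' 1 = i' ∧ B' 2 = j' ∧ B' 3 = k' ∧
        i' * i' = -1 ∧ i' * j' = k' ∧ i' * k' = -j' ∧ j' * i' = -k' ∧ k' * i' = j' ∧
        ((j' * j' = 1 ∧ k' * k' = 1 ∧ j' * k' = -i' ∧ k' * j' = i') ∨
         (j' * j' = 0 ∧ k' * k' = 0 ∧ j' * k' = 0 ∧ k' * j' = 0) ∨
         (j' * j' = -1 ∧ k' * k' = -1 ∧ j' * k' = i' ∧ k' * j' = -i'))) := by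
    rintro ⟨pb, pc, pd, pf, ph, pe, pg⟩
    have hjj' : j * j = a • (1:M) := by rw [hjj, pb, pc, pd]; simp
    have hkk' : k * k = a • (1:M) := by rw [hkk, pb, pc, pd]; simp
    have hjk' : j * k = -(a • i) := by rw [hjk, pf, ph, pe, pg]; simp [neg_smul]
    have hkj' : k * j = a • i := by rw [hkj, pf, ph, pe, pg]; simp [neg_smul]
    rcases lt_trichotomy a 0 with hneg | hzero | hpos
    · -- quaternion case ℍ
      set r : ℝ := Real.sqrt (-a) with hrdef
      have hrpos : 0 < r := Real.sqrt_pos.mpr (by linarith)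
      have hrne : r ≠ 0 := ne_of_gt hrpos
      have hr2 : r^2 = -a := Real.sq_sqrt (by linarith)
      have hrr : r * r = -a := by rw [← pow_two]; exact hr2
      have hrinv : r⁻¹ * r⁻¹ * a = -1 := by
        field_simp
        linarith [hrr]
      refine ⟨B.unitsSMul ![1, 1, Units.mk0 r⁻¹ (inv_ne_zero hrne),
          Units.mk0 r⁻¹ (inv_ne_zero hrne)], i, r⁻¹ • j, r⁻¹ • k,
          ?_, ?_, ?_, ?_, hii, ?_, ?_, ?_, ?_, Or.inr (Or.inr ⟨?_, ?_, ?_, ?_⟩)⟩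
      · simp [Module.Basis.unitsSMul_apply, hB0]
      · simp [Module.Basis.unitsSMul_apply, hB1]
      · simp [Module.Basis.unitsSMul_apply, hB2, Units.smul_def]
      · simp [Module.Basis.unitsSMul_apply, hB3, Units.smul_def]
      · rw [mul_smul_comm, hij]
      · rw [mul_smul_comm, hik, smul_neg]
      · rw [smul_mul_assoc, hji, smul_neg]
      · rw [smul_mul_assoc, hki]
      · rw [smul_mul_assoc, mul_smul_comm, hjj', smul_smul, smul_smul, hrinv,
          neg_smul, one_smul]
      · rw [smul_mul_assoc, mul_smul_comm, hkk', smul_smul, smul_smul, hrinv,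
          neg_smul, one_smul]
      · rw [smul_mul_assoc, mul_smul_comm, hjk', smul_neg, smul_neg, smul_smul, smul_smul,
          hrinv, neg_smul, one_smul, neg_neg]
      · rw [smul_mul_assoc, mul_smul_comm, hkj', smul_smul, smul_smul, hrinv,
          neg_smul, one_smul]
    · -- null case M⁰
      refine ⟨B, i, j, k, hB0, hB1, hB2, hB3, hii, hij, hik, hji, hki,
        Or.inr (Or.inl ⟨?_, ?_, ?_, ?_⟩)⟩
      · rw [hjj', hzero, zero_smul]
      · rw [hkk', hzero, zero_smul]
      · rw [hjk', hzero, zero_smul, neg_zero]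
      · rw [hkj', hzero, zero_smul]
    · -- para-quaternion case M⁺
      set r : ℝ := Real.sqrt a with hrdef
      have hrpos : 0 < r := Real.sqrt_pos.mpr hpos
      have hrne : r ≠ 0 := ne_of_gt hrpos
      have hr2 : r^2 = a := Real.sq_sqrt hpos.le
      have hrr : r * r = a := by rw [← pow_two]; exact hr2
      have hrinv : r⁻¹ * r⁻¹ * a = 1 := by
        field_simp
        linarith [hrr]
      refine ⟨B.unitsSMul ![1, 1, Units.mk0 r⁻¹ (inv_ne_zero hrne),
          Units.mk0 r⁻¹ (inv_ne_zero hrne)], i, r⁻¹ • j, r⁻¹ • k,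
          ?_, ?_, ?_, ?_, hii, ?_, ?_, ?_, ?_, Or.inl ⟨?_, ?_, ?_, ?_⟩⟩
      · simp [Module.Basis.unitsSMul_apply, hB0]
      · simp [Module.Basis.unitsSMul_apply, hB1]
      · simp [Module.Basis.unitsSMul_apply, hB2, Units.smul_def]
      · simp [Module.Basis.unitsSMul_apply, hB3, Units.smul_def]
      · rw [mul_smul_comm, hij]
      · rw [mul_smul_comm, hik, smul_neg]
      · rw [smul_mul_assoc, hji, smul_neg]
      · rw [smul_mul_assoc, hki]
      · rw [smul_mul_assoc, mul_smul_comm, hjj', smul_smul, smul_smul, hrinv, one_smul]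
      · rw [smul_mul_assoc, mul_smul_comm, hkk', smul_smul, smul_smul, hrinv, one_smul]
      · rw [smul_mul_assoc, mul_smul_comm, hjk', smul_neg, smul_neg, smul_smul, smul_smul,
          hrinv, one_smul]
      · rw [smul_mul_assoc, mul_smul_comm, hkj', smul_smul, smul_smul, hrinv, one_smul]
  -- ================= condition (3) → associativity =================
  have C3toAssoc : (∃ (B' : Module.Basis (Fin 4) ℝ M) (i' j' k' : M),
        B' 0 = 1 ∧ B' 1 = i' ∧ B' 2 = j' ∧ B' 3 = k' ∧
        i' * i' = -1 ∧ i' * j' = k' ∧ i' * k' = -j' ∧ j' * i' = -k' ∧ k' * i' = j' ∧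
        ((j' * j' = 1 ∧ k' * k' = 1 ∧ j' * k' = -i' ∧ k' * j' = i') ∨
         (j' * j' = 0 ∧ k' * k' = 0 ∧ j' * k' = 0 ∧ k' * j' = 0) ∨
         (j' * j' = -1 ∧ k' * k' = -1 ∧ j' * k' = i' ∧ k' * j' = -i'))) →
      ∀ x y z : M, x * y * z = x * (y * z) := by
    rintro ⟨B', i', j', k', g0, g1, g2, g3, gii, gij, gik, gji, gki, gtab⟩
    rcases gtab with ⟨t1, t2, t3, t4⟩ | ⟨t1, t2, t3, t4⟩ | ⟨t1, t2, t3, t4⟩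
    · exact assoc_of_table_aux B' i' j' k' 1 g0 g1 g2 g3 gii gij gik gji gki
        (by rw [t1, one_smul]) (by rw [t2, one_smul])
        (by rw [t3, one_smul]) (by rw [t4, one_smul])
    · exact assoc_of_table_aux B' i' j' k' 0 g0 g1 g2 g3 gii gij gik gji gki
        (by rw [t1, zero_smul]) (by rw [t2, zero_smul])
        (by rw [t3, zero_smul, neg_zero]) (by rw [t4, zero_smul])
    · exact assoc_of_table_aux B' i' j' k' (-1) g0 g1 g2 g3 gii gij gik gji gki
        (by rw [t1, neg_smul, one_smul]) (by rw [t2, neg_smul, one_smul])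
        (by rw [t3, neg_smul, one_smul, neg_neg]) (by rw [t4, neg_smul, one_smul])
  -- ================= assembling the equivalences =================
  have AssocToC2 : (∀ x y z : M, x * y * z = x * (y * z)) →
      ((∀ q : M, q * q = -1 → ∀ y : M, assocator q q y = 0 ∧ assocator y q q = 0) ∧
        ∃ q : M, q * q = -1 ∧ q ∉ Submodule.span ℝ ({1, i} : Set M)) := by
    intro h1
    refine ⟨fun q hq y => ⟨?_, ?_⟩, ExistsQ (AssocToP h1)⟩
    · unfold assocator; rw [h1, sub_self]
    · unfold assocator; rw [h1, sub_self]
  refine ⟨⟨AssocToC2, fun h2 => PtoAssoc (C2toP h2)⟩,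
    ⟨fun h2 => PtoC3 (C2toP h2), fun h3 => AssocToC2 (C3toAssoc h3)⟩⟩
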